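/- Let B be the positive operator diagonal in the basis (e_n) with eigenvalues B_n ≥ 0 (B e_n = B_n e_n), let {A_i} be a sequence of positive bounded operators converging in the Hilbert–Schmidt norm to Ā, and suppose there is a constant B₀ with Σ_n B_n ⟪e_n, A_i e_n⟫ ≤ B₀ for every i. Then Σ_n B_n ⟪e_n, Ā e_n⟫ ≤ B₀. -/

import Mathlib

open Filter
open scoped ENNReal InnerProductSpace ComplexOrder

variable {H : Type*} [NormedAddCommGroup H] [InnerProductSpace ℂ H] [CompleteSpace H]

/-- The (squared) Hilbert–Schmidt norm of an operator, computed via the matrix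
elements in the fixed orthonormal Hilbert basis `e`, valued in `[0,∞]`. -/
noncomputable def hsNormSq (e : HilbertBasis ℕ ℂ H) (A : H →L[ℂ] H) : ℝ≥0∞ :=
  ∑' p : ℕ × ℕ, (‖⟪e p.1, A (e p.2)⟫_ℂ‖₊ : ℝ≥0∞) ^ 2

/-- `A n → Ā` in the Hilbert–Schmidt norm. -/
def HSTendsto (e : HilbertBasis ℕ ℂ H) (A : ℕ → H →L[ℂ] H) (Abar : H →L[ℂ] H) : Prop :=
  Tendsto (fun n => hsNormSq e (A n - Abar)) atTop (nhds 0)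

/-- `Tr(A B)` for a positive operator `A` and the positive operator `B` diagonal in the
basis `e` with eigenvalues `B n ≥ 0`: the sum `Σ_n B_n ⟪e n, A (e n)⟫`, valued in `[0,∞]`. -/
noncomputable def diagTrace (e : HilbertBasis ℕ ℂ H) (B : ℕ → ℝ) (A : H →L[ℂ] H) : ℝ≥0∞ :=
  ∑' n : ℕ, ENNReal.ofReal (B n * RCLike.re ⟪e n, A (e n)⟫_ℂ)

/-- If positive operators `A i` converge in Hilbert–Schmidt norm to `Ā`,
`B` is a positive operator diagonal in the basis `e` with eigenvalues `B n ≥ 0`, and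
`Tr(A i · B) ≤ B₀` for every `i`, then `Tr(Ā B) ≤ B₀`. -/
theorem diagTrace_le_of_hs_tendsto
    (e : HilbertBasis ℕ ℂ H) (B : ℕ → ℝ) (hB : ∀ n, 0 ≤ B n)
    (A : ℕ → H →L[ℂ] H) (Abar : H →L[ℂ] H)
    (hpos : ∀ i, (A i).IsPositive) (hlim : HSTendsto e A Abar)
    (B₀ : ℝ) (hbound : ∀ i, diagTrace e B (A i) ≤ ENNReal.ofReal B₀) :
    diagTrace e B Abar ≤ ENNReal.ofReal B₀ := by
  have key : ∀ n, Tendsto (fun i => ENNReal.ofReal (B n * RCLike.re ⟪e n, A i (e n)⟫_ℂ)) atTop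
      (nhds (ENNReal.ofReal (B n * RCLike.re ⟪e n, Abar (e n)⟫_ℂ))) := by
    intro n
    have hl := hlim
    rw [HSTendsto, ENNReal.tendsto_nhds_zero] at hl
    have h2 : Tendsto (fun i => (‖⟪e n, (A i - Abar) (e n)⟫_ℂ‖₊ : ℝ≥0∞)) atTop (nhds 0) := by
      rw [ENNReal.tendsto_nhds_zero]
      intro ε hε
      filter_upwards [hl (ε ^ 2) (by positivity)] with i hi
      have hle : (‖⟪e n, (A i - Abar) (e n)⟫_ℂ‖₊ : ℝ≥0∞) ^ 2 ≤ ε ^ 2 :=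
        le_trans (ENNReal.le_tsum (n, n)) hi
      by_contra h
      push_neg at h
      exact absurd hle (not_le.mpr ((ENNReal.pow_lt_pow_left_iff two_ne_zero).mpr h))
    have h2' : Tendsto (fun i => ‖⟪e n, (A i - Abar) (e n)⟫_ℂ‖) atTop (nhds 0) := by
      simpa [Function.comp_def] using (ENNReal.tendsto_toReal ENNReal.zero_ne_top).comp h2
    have h3 : Tendsto (fun i => ⟪e n, A i (e n)⟫_ℂ) atTop (nhds ⟪e n, Abar (e n)⟫_ℂ) := by
      rw [tendsto_iff_norm_sub_tendsto_zero]
      convert h2' using 2 with i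
      simp [ContinuousLinearMap.sub_apply, inner_sub_right]
    have h4 : Tendsto (fun i => B n * RCLike.re ⟪e n, A i (e n)⟫_ℂ) atTop
        (nhds (B n * RCLike.re ⟪e n, Abar (e n)⟫_ℂ)) :=
      tendsto_const_nhds.mul ((RCLike.continuous_re.tendsto _).comp h3)
    exact ENNReal.tendsto_ofReal h4
  rw [diagTrace, ENNReal.tsum_eq_iSup_sum]
  refine iSup_le fun s => ?_
  have hsum : Tendsto (fun i => ∑ n ∈ s, ENNReal.ofReal (B n * RCLike.re ⟪e n, A i (e n)⟫_ℂ))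
      atTop (nhds (∑ n ∈ s, ENNReal.ofReal (B n * RCLike.re ⟪e n, Abar (e n)⟫_ℂ))) :=
    tendsto_finset_sum s fun n _ => key n
  refine le_of_tendsto hsum (Eventually.of_forall fun i => ?_)
  exact le_trans (ENNReal.sum_le_tsum s) (hbound i)
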